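/- Let (A,·,∘) be a transposed Novikov-Poisson algebra such that (A,·) has a multiplicative unit e. Then the Novikov product ∘ is commutative, and consequently (A,·,∘) is a Novikov-Poisson algebra. -/
import Mathlib


/-- If a transposed Novikov-Poisson algebra has a unit for ·, then
∘ is commutative and (A,·,∘) is a Novikov-Poisson algebra. -/
theorem stmt7 {k A : Type*} [Field k] [AddCommGroup A] [Module k A]
    (hchar : (2:k) ≠ 0)
    (mul cir : A →ₗ[k] A →ₗ[k] A)
    (hcomm : ∀ x y : A, mul x y = mul y x)
    (hassoc : ∀ x y z : A, mul (mul x y) z = mul x (mul y z))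
    (hnov1 : ∀ x y z : A, cir (cir x y) z = cir (cir x z) y)
    (hnov2 : ∀ x y z : A, cir (cir x y) z - cir x (cir y z) = cir (cir y x) z - cir y (cir x z))
    (htnp1 : ∀ x y z : A, cir (mul x y) z = cir (mul x z) y)
    (htnp2 : ∀ x y z : A, (2:k) • mul z (cir x y) = cir (mul z x) y + cir x (mul z y))
    (e : A) (he : ∀ x : A, mul e x = x) :
    (∀ x y : A, cir x y = cir y x) ∧
    (∀ x y z : A, cir (mul x y) z = mul x (cir y z)) ∧
    (∀ x y z : A, mul (cir x y) z - mul (cir y x) z = cir x (mul y z) - cir y (mul x z)) := by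
  have ccomm : ∀ x y : A, cir x y = cir y x := by
    intro x y
    have h := htnp1 e x y
    rwa [he, he] at h
  have hnp : ∀ x y z : A, cir (mul x y) z = mul x (cir y z) := by
    intro x y z
    have h := htnp2 y z x
    rw [ccomm y (mul x z), htnp1 x z y, ← two_smul k (cir (mul x y) z)] at h
    exact (smul_right_injective A hchar h).symm
  refine ⟨ccomm, hnp, ?_⟩
  intro x y z
  rw [ccomm x y, sub_self, ccomm x (mul y z), ccomm y (mul x z),
    htnp1 y z x, htnp1 x z y, hcomm y x, sub_self]
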